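/- (Theorem 1, sufficiency and value.) Let {(q_i, ρ_i)}_{i=1}^N be an ensemble of qubit states with Bloch vectors v_i and q_1 = max_i q_i; set e_i = q_1 − q_i and s_i = q_i v_i − q_1 v_1 (so s_1 = 0), and assume {s_1,…,s_N} is affinely independent (D = N−1). Suppose c* lies in the relative interior of conv{s_1,…,s_N} and satisfies ‖c* − s_i‖₂ − ‖c*‖₂ = e_i for all i ∈ {2,…,N}. Then p_guess = q_1 + ‖c*‖₂, the optimal POVM is unique, and it equals M_i = p_i(I + u_i·σ) with u_i = (s_i − c*)/‖s_i − c*‖₂ and p_i = t_i ‖s_i − c*‖₂ / ∑_j t_j ‖s_j − c*‖₂, where (t_i) are the barycentric coordinates of c* in the simplex conv{s_1,…,s_N}. -/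

import Mathlib

open Matrix
open scoped ComplexOrder

noncomputable section

/-- The Pauli matrix σ_X. -/
def sigmaX : Matrix (Fin 2) (Fin 2) ℂ := !![0, 1; 1, 0]

/-- The Pauli matrix σ_Y. -/
def sigmaY : Matrix (Fin 2) (Fin 2) ℂ := !![0, -Complex.I; Complex.I, 0]

/-- The Pauli matrix σ_Z. -/
def sigmaZ : Matrix (Fin 2) (Fin 2) ℂ := !![1, 0; 0, -1]

/-- `v · σ = v₁ σ_X + v₂ σ_Y + v₃ σ_Z` for a vector `v ∈ ℝ³`. -/
def pauliDot (v : EuclideanSpace ℝ (Fin 3)) : Matrix (Fin 2) (Fin 2) ℂ :=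
  (v 0 : ℂ) • sigmaX + (v 1 : ℂ) • sigmaY + (v 2 : ℂ) • sigmaZ

/-- A qubit state: a 2×2 complex positive semidefinite matrix with trace 1. -/
def IsQubitState (ρ : Matrix (Fin 2) (Fin 2) ℂ) : Prop :=
  ρ.PosSemidef ∧ ρ.trace = 1

/-- An `N`-outcome POVM: positive semidefinite matrices summing to the identity. -/
def IsPOVM {N : ℕ} (M : Fin N → Matrix (Fin 2) (Fin 2) ℂ) : Prop :=
  (∀ i, (M i).PosSemidef) ∧ ∑ i, M i = 1

/-- The guessing probability of the ensemble `{(q i, ρ i)}`: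
the supremum over all `N`-outcome POVMs of `∑ i, q i · Re (tr (ρ i * M i))`. -/
def pGuess {N : ℕ} (q : Fin N → ℝ) (ρ : Fin N → Matrix (Fin 2) (Fin 2) ℂ) : ℝ :=
  sSup {x : ℝ | ∃ M : Fin N → Matrix (Fin 2) (Fin 2) ℂ,
    IsPOVM M ∧ x = ∑ i, q i * ((ρ i * M i).trace).re}

/-- A POVM is optimal when it attains the guessing probability. -/
def IsOptimalPOVM {N : ℕ} (q : Fin N → ℝ) (ρ M : Fin N → Matrix (Fin 2) (Fin 2) ℂ) : Prop :=
  IsPOVM M ∧ ∑ i, q i * ((ρ i * M i).trace).re = pGuess q ρ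

/- ------------------------------------------------------------------ -/
/- Auxiliary infrastructure for the proof of Theorem 1 (sufficiency). -/
/- ------------------------------------------------------------------ -/

open scoped RealInnerProductSpace

namespace Thm1

abbrev E3 := EuclideanSpace ℝ (Fin 3)
abbrev Mat2 := Matrix (Fin 2) (Fin 2) ℂ

def cα (M : Mat2) : ℝ := ((M 0 0).re + (M 1 1).re) / 2
def c1 (M : Mat2) : ℝ := ((M 0 1).re + (M 1 0).re) / 2
def c2 (M : Mat2) : ℝ := ((M 1 0).im - (M 0 1).im) / 2
def c3 (M : Mat2) : ℝ := ((M 0 0).re - (M 1 1).re) / 2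
def cw (M : Mat2) : E3 := (WithLp.linearEquiv 2 ℝ (Fin 3 → ℝ)).symm ![c1 M, c2 M, c3 M]

lemma cw_apply0 (M : Mat2) : cw M 0 = c1 M := rfl
lemma cw_apply1 (M : Mat2) : cw M 1 = c2 M := rfl
lemma cw_apply2 (M : Mat2) : cw M 2 = c3 M := rfl

lemma pauliDot_apply (x : E3) :
    pauliDot x = !![(x 2 : ℂ), (x 0 : ℂ) - (x 1 : ℂ) * Complex.I;
                    (x 0 : ℂ) + (x 1 : ℂ) * Complex.I, -(x 2 : ℂ)] := by
  ext i j
  fin_cases i <;> fin_cases j <;>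
    simp [pauliDot, sigmaX, sigmaY, sigmaZ] <;> ring

/-- Trace formula. -/
lemma trace_re_formula (x : E3) (M : Mat2) :
    (((2⁻¹ : ℂ) • (1 + pauliDot x) * M).trace).re
      = cα M + (x 0 * c1 M + x 1 * c2 M + x 2 * c3 M) := by
  rw [pauliDot_apply]
  simp [Matrix.trace_fin_two, Matrix.mul_apply, Fin.sum_univ_two, Matrix.one_apply,
    cα, c1, c2, c3, Complex.add_re, Complex.mul_re, Complex.mul_im]
  ring

lemma trace_re_inner (x : E3) (M : Mat2) :
    (((2⁻¹ : ℂ) • (1 + pauliDot x) * M).trace).re = cα M + ⟪x, cw M⟫ := by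
  rw [trace_re_formula]
  rw [PiLp.inner_apply]
  simp [Fin.sum_univ_three, cw_apply0, cw_apply1, cw_apply2]
  ring

lemma cα_combo (r : ℝ) (x : E3) : cα ((r : ℂ) • 1 + pauliDot x) = r := by
  rw [pauliDot_apply]
  simp [cα, Matrix.one_apply]
  ring

lemma cw_combo (r : ℝ) (x : E3) : cw ((r : ℂ) • 1 + pauliDot x) = x := by
  have h0 : ∀ j, cw ((r : ℂ) • 1 + pauliDot x) j = x j := by
    intro j
    rw [pauliDot_apply]
    fin_cases j <;>
      (simp [cw_apply0, cw_apply1, cw_apply2, c1, c2, c3, Matrix.one_apply] <;> ring)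
  exact WithLp.ofLp_injective 2 (funext fun j => h0 j)

/-- Hermitian reconstruction. -/
lemma herm_decomp {M : Mat2} (h : M.IsHermitian) :
    M = ((cα M : ℝ) : ℂ) • 1 + pauliDot (cw M) := by
  have e : ∀ i j, (starRingEnd ℂ) (M j i) = M i j := fun i j => h.apply i j
  have h00 : (M 0 0).im = 0 := by
    have := (Complex.ext_iff.mp (e 0 0)).2; simp at this; linarith
  have h11 : (M 1 1).im = 0 := by
    have := (Complex.ext_iff.mp (e 1 1)).2; simp at this; linarith
  have h10re : (M 1 0).re = (M 0 1).re := by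
    have := (Complex.ext_iff.mp (e 0 1)).1; simp at this; linarith
  have h10im : (M 1 0).im = -(M 0 1).im := by
    have := (Complex.ext_iff.mp (e 0 1)).2; simp at this; linarith
  rw [pauliDot_apply]
  ext i j
  fin_cases i <;> fin_cases j <;>
    (apply Complex.ext <;>
      simp [cα, Matrix.one_apply, cw_apply0, cw_apply1, cw_apply2, c1, c2, c3] <;>
      linarith)

lemma norm_sq_E3 (x : E3) : ‖x‖ ^ 2 = x 0 ^ 2 + x 1 ^ 2 + x 2 ^ 2 := by
  rw [← real_inner_self_eq_norm_sq, PiLp.inner_apply, Fin.sum_univ_three]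
  simp [sq]

/-- PSD forward: components bound. -/
lemma psd_comps {M : Mat2} (h : M.PosSemidef) : 0 ≤ cα M ∧ ‖cw M‖ ≤ cα M := by
  have herm := h.1
  have e : ∀ i j, (starRingEnd ℂ) (M j i) = M i j := fun i j => herm.apply i j
  have h00 : (M 0 0).im = 0 := by
    have := (Complex.ext_iff.mp (e 0 0)).2; simp at this; linarith
  have h11 : (M 1 1).im = 0 := by
    have := (Complex.ext_iff.mp (e 1 1)).2; simp at this; linarith
  have h10re : (M 1 0).re = (M 0 1).re := by
    have := (Complex.ext_iff.mp (e 0 1)).1; simp at this; linarith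
  have h10im : (M 1 0).im = -(M 0 1).im := by
    have := (Complex.ext_iff.mp (e 0 1)).2; simp at this; linarith
  have ha : 0 ≤ (M 0 0).re := by
    have := h.re_dotProduct_nonneg (Pi.single 0 1)
    simpa [dotProduct, Matrix.mulVec, Fin.sum_univ_two, Pi.single] using this
  have hb : 0 ≤ (M 1 1).re := by
    have := h.re_dotProduct_nonneg (Pi.single 1 1)
    simpa [dotProduct, Matrix.mulVec, Fin.sum_univ_two, Pi.single] using this
  have hM00 : M 0 0 = ((M 0 0).re : ℂ) := by
    apply Complex.ext <;> simp [h00]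
  have hM11 : M 1 1 = ((M 1 1).re : ℂ) := by
    apply Complex.ext <;> simp [h11]
  have hM10 : M 1 0 = (starRingEnd ℂ) (M 0 1) := (e 1 0).symm
  -- quadratic bound
  have key : ∀ r : ℝ, 0 ≤ (M 0 0).re * (r * r)
      + (-(2 * Complex.normSq (M 0 1))) * r + (M 1 1).re * Complex.normSq (M 0 1) := by
    intro r
    have h2 := h.re_dotProduct_nonneg ![(r : ℂ), -(starRingEnd ℂ) (M 0 1)]
    simp only [dotProduct, Matrix.mulVec, Fin.sum_univ_two, Matrix.cons_val_zero,
      Matrix.cons_val_one, Matrix.head_cons] at h2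
    rw [hM00, hM11, hM10] at h2
    simp only [RCLike.re_to_complex, Pi.star_apply, Matrix.cons_val_zero,
      Matrix.cons_val_one, Matrix.head_cons,
      star_neg, Complex.star_def, Complex.conj_conj, Complex.conj_ofReal,
      Complex.add_re, Complex.add_im, Complex.mul_re, Complex.mul_im, Complex.neg_re,
      Complex.neg_im, Complex.conj_re, Complex.conj_im, Complex.ofReal_re,
      Complex.ofReal_im, Complex.normSq_apply] at h2 ⊢
    nlinarith [h2]
  have hdisc := discrim_le_zero key
  rw [discrim] at hdisc
  have hdet : Complex.normSq (M 0 1) ≤ (M 0 0).re * (M 1 1).re := by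
    rcases eq_or_lt_of_le (Complex.normSq_nonneg (M 0 1)) with hz | hz
    · nlinarith [ha, hb]
    · nlinarith [hdisc]
  have hc1 : c1 M = (M 0 1).re := by unfold c1; rw [h10re]; ring
  have hc2 : c2 M = -(M 0 1).im := by unfold c2; rw [h10im]; ring
  have hcα : 0 ≤ cα M := by unfold cα; linarith
  refine ⟨hcα, ?_⟩
  have hsq : ‖cw M‖ ^ 2 ≤ cα M ^ 2 := by
    rw [norm_sq_E3, cw_apply0, cw_apply1, cw_apply2, hc1, hc2]
    unfold cα c3
    rw [Complex.normSq_apply] at hdet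
    nlinarith [hdet]
  have := Real.sqrt_le_sqrt hsq
  rwa [Real.sqrt_sq (norm_nonneg _), Real.sqrt_sq hcα] at this

lemma pauliDot_conjTranspose (x : E3) : (pauliDot x)ᴴ = pauliDot x := by
  ext i j
  fin_cases i <;> fin_cases j <;>
    simp [pauliDot, sigmaX, sigmaY, sigmaZ, Matrix.conjTranspose_apply] <;> ring

lemma pauliDot_mul_self (x : E3) :
    pauliDot x * pauliDot x = ((‖x‖ ^ 2 : ℝ) : ℂ) • 1 := by
  have hn : (‖x‖ ^ 2 : ℝ) = x 0 ^ 2 + x 1 ^ 2 + x 2 ^ 2 := norm_sq_E3 x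
  rw [hn]
  ext i j
  fin_cases i <;> fin_cases j <;>
    (simp only [pauliDot, sigmaX, sigmaY, sigmaZ, Matrix.mul_apply, Fin.sum_univ_two,
       Matrix.smul_apply, Matrix.add_apply, Matrix.one_apply, Matrix.cons_val_zero,
       Matrix.cons_val_one, Matrix.head_cons, Matrix.cons_val', Matrix.empty_val',
       Matrix.cons_val_fin_one, Matrix.head_fin_const, if_true, if_false,
       Complex.ext_iff, Complex.add_re, Complex.add_im, Complex.mul_re, Complex.mul_im,
       Complex.I_re, Complex.I_im, Complex.ofReal_re, Complex.ofReal_im, Complex.neg_re,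
       Complex.neg_im, Complex.zero_re, Complex.zero_im, Complex.one_re, Complex.one_im,
       Complex.smul_re, Complex.smul_im, smul_eq_mul, Complex.ofReal_pow,
       Fin.isValue, ne_eq, one_ne_zero, not_false_eq_true, zero_ne_one, ite_true, ite_false] <;>
     norm_num <;> constructor <;> ring)

/-- PSD construction. -/
lemma psd_construct (p : ℝ) (hp : 0 ≤ p) (x : E3) (hx : ‖x‖ = 1) :
    ((p : ℂ) • (1 + pauliDot x)).PosSemidef := by
  set B : Mat2 := 1 + pauliDot x with hB
  have hBH : Bᴴ = B := by
    rw [hB, Matrix.conjTranspose_add, Matrix.conjTranspose_one, pauliDot_conjTranspose]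
  have hBB : B * B = (2 : ℂ) • B := by
    rw [hB, add_mul, one_mul, mul_add, mul_one, pauliDot_mul_self, hx, one_pow,
      Complex.ofReal_one, one_smul, two_smul]
    abel
  have hs2 : Real.sqrt (p / 2) * Real.sqrt (p / 2) * 2 = p := by
    rw [Real.mul_self_sqrt (by linarith)]; ring
  have key : ((Real.sqrt (p / 2) : ℂ) • B)ᴴ * ((Real.sqrt (p / 2) : ℂ) • B) = (p : ℂ) • B := by
    rw [Matrix.conjTranspose_smul, hBH, Matrix.smul_mul, Matrix.mul_smul, hBB,
      smul_smul, smul_smul]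
    congr 1
    rw [Complex.star_def, Complex.conj_ofReal]
    exact_mod_cast congrArg (Complex.ofReal) hs2
  rw [← key]
  exact Matrix.posSemidef_conjTranspose_mul_self _

lemma pauliDot_smul (r : ℝ) (x : E3) : pauliDot (r • x) = (r : ℂ) • pauliDot x := by
  simp only [pauliDot, PiLp.smul_apply, smul_eq_mul, Complex.ofReal_mul]
  module

lemma pauliDot_add (x y : E3) : pauliDot (x + y) = pauliDot x + pauliDot y := by
  simp only [pauliDot, PiLp.add_apply, Complex.ofReal_add]
  module

lemma pauliDot_zero : pauliDot 0 = 0 := by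
  simp [pauliDot]

def pauliDotHom : E3 →+ Mat2 := AddMonoidHom.mk' pauliDot pauliDot_add

lemma pauliDot_sum {n : ℕ} (f : Fin n → E3) :
    pauliDot (∑ i, f i) = ∑ i, pauliDot (f i) :=
  map_sum pauliDotHom f Finset.univ

lemma cα_sum {n : ℕ} (f : Fin n → Mat2) : cα (∑ i, f i) = ∑ i, cα (f i) := by
  unfold cα
  simp [Matrix.sum_apply, Complex.re_sum, ← Finset.sum_add_distrib, Finset.sum_div]

lemma cα_one : cα 1 = 1 := by simp [cα, Matrix.one_apply]

lemma cw_sum {n : ℕ} (f : Fin n → Mat2) : cw (∑ i, f i) = ∑ i, cw (f i) := by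
  unfold cw
  rw [← map_sum]
  congr 1
  funext j
  fin_cases j <;>
    (simp only [Fin.mk_zero, Fin.mk_one, Fin.reduceFinMk, c1, c2, c3, Matrix.cons_val_zero,
       Matrix.cons_val_one, Matrix.cons_val_two, Matrix.head_cons, Matrix.tail_cons,
       Matrix.head_fin_const,
       Finset.sum_apply, Matrix.sum_apply, Complex.re_sum, Complex.im_sum] <;>
     rw [← Finset.sum_div] <;> congr 1 <;>
     first
       | rw [Finset.sum_add_distrib]
       | rw [Finset.sum_sub_distrib])

lemma cw_one : cw 1 = 0 := by
  have h0 : ∀ j, cw (1 : Mat2) j = 0 := by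
    intro j
    fin_cases j <;> simp [cw, c1, c2, c3, Matrix.one_apply, WithLp.linearEquiv]
  exact WithLp.ofLp_injective 2 (funext fun j => h0 j)

end Thm1

open Thm1

/-- Theorem 1, sufficiency and value. Index `0` plays the role of
index `1` in the paper, so `q 0 = max_i q i`, `e i = q 0 - q i`,
`s i = q i • v i - q 0 • v 0` (hence `s 0 = 0`). If `{s i}` is affinely
independent (`D = N - 1`), `c` lies in the relative interior of
`conv {s 1, …, s N}` with barycentric coordinates `t`, and
`‖c - s i‖ - ‖c‖ = e i` for all `i ≠ 0`, then `pGuess = q 0 + ‖c‖` and the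
POVM `M i = p i • (1 + u i · σ)` (with `p`, `u` as in Eq. (19)) is the unique
optimal POVM. -/
theorem thm1_sufficiency {N : ℕ} (hN : 2 ≤ N)
    (q : Fin N → ℝ) (v : Fin N → EuclideanSpace ℝ (Fin 3))
    (ρ : Fin N → Matrix (Fin 2) (Fin 2) ℂ)
    (hq : ∀ i, 0 < q i) (hqsum : ∑ i, q i = 1)
    (hv : ∀ i, ‖v i‖ ≤ 1)
    (hρ : ∀ i, ρ i = (2⁻¹ : ℂ) • (1 + pauliDot (v i)))
    (hmax : ∀ i, q i ≤ q ⟨0, by omega⟩)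
    (e : Fin N → ℝ) (he : ∀ i, e i = q ⟨0, by omega⟩ - q i)
    (s : Fin N → EuclideanSpace ℝ (Fin 3))
    (hs : ∀ i, s i = q i • v i - q (⟨0, by omega⟩ : Fin N) • v ⟨0, by omega⟩)
    (haff : AffineIndependent ℝ s)
    (c : EuclideanSpace ℝ (Fin 3))
    (hc : c ∈ intrinsicInterior ℝ (convexHull ℝ (Set.range s)))
    (hhyp : ∀ i, i ≠ ⟨0, by omega⟩ → ‖c - s i‖ - ‖c‖ = e i)
    (t : Fin N → ℝ) (ht : ∀ i, 0 < t i) (htsum : ∑ i, t i = 1)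
    (hts : ∑ i, t i • s i = c)
    (p : Fin N → ℝ)
    (hp : ∀ i, p i = t i * ‖s i - c‖ / ∑ j, t j * ‖s j - c‖)
    (u : Fin N → EuclideanSpace ℝ (Fin 3))
    (hu : ∀ i, u i = ‖s i - c‖⁻¹ • (s i - c)) :
    pGuess q ρ = q ⟨0, by omega⟩ + ‖c‖ ∧
    IsOptimalPOVM q ρ (fun i => (p i : ℂ) • (1 + pauliDot (u i))) ∧
    (∀ M : Fin N → Matrix (Fin 2) (Fin 2) ℂ, IsOptimalPOVM q ρ M →
      M = fun i => (p i : ℂ) • (1 + pauliDot (u i))) := by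
  classical
  have hN0 : 0 < N := by omega
  haveI : Nonempty (Fin N) := ⟨⟨0, hN0⟩⟩
  haveI : Nontrivial (Fin N) := ⟨⟨⟨0, hN0⟩, ⟨1, by omega⟩, by simp [Fin.ext_iff]⟩⟩
  -- normalize the distinguished index
  have he' : ∀ i, e i = q ⟨0, hN0⟩ - q i := he
  have hs' : ∀ i, s i = q i • v i - q (⟨0, hN0⟩ : Fin N) • v ⟨0, hN0⟩ := hs
  have hhyp' : ∀ i, i ≠ (⟨0, hN0⟩ : Fin N) → ‖c - s i‖ - ‖c‖ = e i := hhyp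
  have hs0 : s ⟨0, hN0⟩ = 0 := by rw [hs']; exact sub_self _
  have he0 : e ⟨0, hN0⟩ = 0 := by rw [he']; exact sub_self _
  have hnormsc : ∀ i, ‖s i - c‖ = ‖c‖ + e i := by
    intro i
    by_cases hi : i = (⟨0, hN0⟩ : Fin N)
    · subst hi
      rw [hs0, he0, zero_sub, norm_neg, add_zero]
    · have h := hhyp' i hi
      rw [norm_sub_rev]
      linarith
  have hnorm_pos : ∀ i, 0 < ‖s i - c‖ := by
    intro i
    rcases (norm_nonneg (s i - c)).lt_or_eq with h0 | h0
    · exact h0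
    · exfalso
      have hsc : s i = c := by
        have h1 : s i - c = 0 := by rwa [eq_comm, norm_eq_zero] at h0
        exact sub_eq_zero.mp h1
      have hδ := haff.eq_of_sum_eq_sum (s := Finset.univ) (w₁ := t)
        (w₂ := fun j => if j = i then (1 : ℝ) else 0)
        (by rw [htsum]; simp)
        (by rw [hts, ← hsc]; simp)
      obtain ⟨j, hj⟩ := exists_ne i
      have hj2 := hδ j (Finset.mem_univ j)
      simp only [if_neg hj] at hj2
      exact (ht j).ne' hj2
  set S : ℝ := ∑ j, t j * ‖s j - c‖ with hSdef
  have hSpos : 0 < S :=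
    Finset.sum_pos (fun j _ => mul_pos (ht j) (hnorm_pos j)) Finset.univ_nonempty
  have hp_pos : ∀ i, 0 < p i := fun i => by
    rw [hp i]; exact div_pos (mul_pos (ht i) (hnorm_pos i)) hSpos
  have hpsum : ∑ i, p i = 1 := by
    have h1 : ∑ i, p i = (∑ i, t i * ‖s i - c‖) / S := by
      rw [Finset.sum_div]; exact Finset.sum_congr rfl fun i _ => hp i
    rw [h1, ← hSdef]; exact div_self hSpos.ne'
  have hu_norm : ∀ i, ‖u i‖ = 1 := fun i => by
    rw [hu i, norm_smul, Real.norm_eq_abs, abs_of_pos (inv_pos.mpr (hnorm_pos i)),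
      inv_mul_cancel₀ (hnorm_pos i).ne']
  have hpu : ∀ i, p i • u i = (t i / S) • (s i - c) := fun i => by
    rw [hp i, hu i, smul_smul]
    congr 1
    field_simp [(hnorm_pos i).ne', hSpos.ne']
    try ring
  have hpusum : ∑ i, p i • u i = 0 := by
    have h1 : ∀ i, p i • u i = S⁻¹ • (t i • s i - t i • c) := by
      intro i
      rw [hpu i, div_eq_inv_mul, ← smul_smul, smul_sub]
    calc ∑ i, p i • u i = ∑ i, S⁻¹ • (t i • s i - t i • c) :=
          Finset.sum_congr rfl fun i _ => h1 i
      _ = S⁻¹ • (∑ i, (t i • s i - t i • c)) := (Finset.smul_sum).symm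
      _ = S⁻¹ • ((∑ i, t i • s i) - (∑ i, t i) • c) := by
          rw [Finset.sum_sub_distrib, Finset.sum_smul]
      _ = 0 := by rw [hts, htsum, one_smul, sub_self, smul_zero]
  have hM712 : ∀ i, (p i : ℂ) • (1 + pauliDot (u i))
      = ((p i : ℝ) : ℂ) • 1 + pauliDot (p i • u i) := by
    intro i
    rw [smul_add, pauliDot_smul]
  have hMcα : ∀ i, cα ((p i : ℂ) • (1 + pauliDot (u i))) = p i := by
    intro i; rw [hM712 i, cα_combo]
  have hMcw : ∀ i, cw ((p i : ℂ) • (1 + pauliDot (u i))) = p i • u i := by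
    intro i; rw [hM712 i, cw_combo]
  have hpovm : IsPOVM (fun i => (p i : ℂ) • (1 + pauliDot (u i))) := by
    constructor
    · intro i
      exact psd_construct (p i) (hp_pos i).le (u i) (hu_norm i)
    · calc ∑ i, (p i : ℂ) • (1 + pauliDot (u i))
          = ∑ i, (((p i : ℝ) : ℂ) • 1 + pauliDot (p i • u i)) :=
            Finset.sum_congr rfl fun i _ => hM712 i
        _ = (∑ i, ((p i : ℝ) : ℂ)) • 1 + pauliDot (∑ i, p i • u i) := by
            rw [Finset.sum_add_distrib, ← Finset.sum_smul, ← pauliDot_sum]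
        _ = 1 := by
            rw [hpusum, pauliDot_zero, add_zero, ← Complex.ofReal_sum, hpsum,
              Complex.ofReal_one, one_smul]
  -- objective rewriting
  have obj_eq : ∀ M : Fin N → Matrix (Fin 2) (Fin 2) ℂ, (∑ i, M i = 1) →
      ∑ i, q i * ((ρ i * M i).trace).re
        = q ⟨0, hN0⟩ + ∑ i, (⟪s i, cw (M i)⟫ - e i * cα (M i)) := by
    intro M hM1
    have hA : ∑ i, cα (M i) = 1 := by rw [← cα_sum, hM1, cα_one]
    have hW : ∑ i, cw (M i) = 0 := by rw [← cw_sum, hM1, cw_one]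
    have step1 : ∑ i, q i * ((ρ i * M i).trace).re
        = ∑ i, (q i * cα (M i) + ⟪q i • v i, cw (M i)⟫) := by
      refine Finset.sum_congr rfl fun i _ => ?_
      rw [hρ i, trace_re_inner, real_inner_smul_left]
      ring
    have step2 : ∀ i, ⟪q i • v i, cw (M i)⟫
        = ⟪s i, cw (M i)⟫ + ⟪q ⟨0, hN0⟩ • v ⟨0, hN0⟩, cw (M i)⟫ := by
      intro i
      rw [← inner_add_left]
      congr 1
      rw [hs' i]
      abel
    have step3 : ∑ i, ⟪(q ⟨0, hN0⟩ • v ⟨0, hN0⟩ : EuclideanSpace ℝ (Fin 3)), cw (M i)⟫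
        = 0 := by
      rw [← inner_sum, hW, inner_zero_right]
    have step4 : ∑ i, q i * cα (M i) = q ⟨0, hN0⟩ - ∑ i, e i * cα (M i) := by
      have h4 : ∀ i, q i * cα (M i) = q ⟨0, hN0⟩ * cα (M i) - e i * cα (M i) := by
        intro i; rw [he' i]; ring
      rw [Finset.sum_congr rfl fun i _ => h4 i, Finset.sum_sub_distrib, ← Finset.mul_sum,
        hA, mul_one]
    rw [step1, Finset.sum_add_distrib, Finset.sum_congr rfl fun i _ => step2 i,
      Finset.sum_add_distrib, step3, step4, add_zero, Finset.sum_sub_distrib]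
    ring
  -- per-term bound
  have term_le : ∀ i (Mi : Matrix (Fin 2) (Fin 2) ℂ), Mi.PosSemidef →
      ⟪s i, cw Mi⟫ - e i * cα Mi ≤ ⟪c, cw Mi⟫ + ‖c‖ * cα Mi := by
    intro i Mi hMi
    obtain ⟨hα0, hwα⟩ := psd_comps hMi
    have hCS : ⟪s i - c, cw Mi⟫ ≤ ‖s i - c‖ * ‖cw Mi‖ := real_inner_le_norm _ _
    have h2 : ‖s i - c‖ * ‖cw Mi‖ ≤ ‖s i - c‖ * cα Mi :=
      mul_le_mul_of_nonneg_left hwα (norm_nonneg _)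
    have hsplit : ⟪s i, cw Mi⟫ = ⟪s i - c, cw Mi⟫ + ⟪c, cw Mi⟫ := by
      rw [inner_sub_left]; ring
    have hei : e i = ‖s i - c‖ - ‖c‖ := by rw [hnormsc i]; ring
    rw [hsplit, hei]
    nlinarith [hCS, h2]
  have rhs_eq : ∀ M : Fin N → Matrix (Fin 2) (Fin 2) ℂ, (∑ i, M i = 1) →
      ∑ i, (⟪c, cw (M i)⟫ + ‖c‖ * cα (M i)) = ‖c‖ := by
    intro M hM1
    have hA : ∑ i, cα (M i) = 1 := by rw [← cα_sum, hM1, cα_one]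
    have hW : ∑ i, cw (M i) = 0 := by rw [← cw_sum, hM1, cw_one]
    rw [Finset.sum_add_distrib, ← inner_sum, hW, inner_zero_right, ← Finset.mul_sum, hA,
      mul_one, zero_add]
  have ub : ∀ M, IsPOVM M → ∑ i, q i * ((ρ i * M i).trace).re ≤ q ⟨0, hN0⟩ + ‖c‖ := by
    intro M hM
    rw [obj_eq M hM.2]
    have hle : ∑ i, (⟪s i, cw (M i)⟫ - e i * cα (M i))
        ≤ ∑ i, (⟪c, cw (M i)⟫ + ‖c‖ * cα (M i)) :=
      Finset.sum_le_sum fun i _ => term_le i (M i) (hM.1 i)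
    have h3 := rhs_eq M hM.2
    linarith
  -- value at the candidate POVM
  have hval : ∑ i, q i * ((ρ i * ((p i : ℂ) • (1 + pauliDot (u i)))).trace).re
      = q ⟨0, hN0⟩ + ‖c‖ := by
    rw [obj_eq _ hpovm.2]
    congr 1
    have hterm : ∀ i, ⟪s i, cw ((p i : ℂ) • (1 + pauliDot (u i)))⟫
        - e i * cα ((p i : ℂ) • (1 + pauliDot (u i)))
        = ⟪c, p i • u i⟫ + ‖c‖ * p i := by
      intro i
      rw [hMcw i, hMcα i]
      have h1 : ⟪s i - c, u i⟫ = ‖s i - c‖ := by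
        rw [hu i, real_inner_smul_right, real_inner_self_eq_norm_sq]
        rw [sq]
        rw [← mul_assoc, inv_mul_cancel₀ (hnorm_pos i).ne', one_mul]
      have hsplit : ⟪s i, p i • u i⟫ = ⟪s i - c, p i • u i⟫ + ⟪c, p i • u i⟫ := by
        rw [inner_sub_left]; ring
      have hei : e i = ‖s i - c‖ - ‖c‖ := by rw [hnormsc i]; ring
      rw [hsplit, hei, real_inner_smul_right, h1]
      ring
    rw [Finset.sum_congr rfl fun i _ => hterm i, Finset.sum_add_distrib, ← inner_sum,
      hpusum, inner_zero_right, ← Finset.mul_sum, hpsum, mul_one, zero_add]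
  have hgreat : IsGreatest {x : ℝ | ∃ M : Fin N → Matrix (Fin 2) (Fin 2) ℂ,
      IsPOVM M ∧ x = ∑ i, q i * ((ρ i * M i).trace).re} (q ⟨0, hN0⟩ + ‖c‖) := by
    constructor
    · exact ⟨_, hpovm, hval.symm⟩
    · rintro x ⟨M, hM, rfl⟩
      exact ub M hM
  have hpg : pGuess q ρ = q ⟨0, hN0⟩ + ‖c‖ := hgreat.csSup_eq
  refine ⟨hpg, ⟨hpovm, ?_⟩, ?_⟩
  · rw [hpg]; exact hval
  · intro M hMopt
    obtain ⟨hMpovm, hMval⟩ := hMopt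
    rw [hpg] at hMval
    have hA : ∑ i, cα (M i) = 1 := by rw [← cα_sum, hMpovm.2, cα_one]
    have hWsum : ∑ i, cw (M i) = 0 := by rw [← cw_sum, hMpovm.2, cw_one]
    have hsum_eq : ∑ i, (⟪s i, cw (M i)⟫ - e i * cα (M i))
        = ∑ i, (⟪c, cw (M i)⟫ + ‖c‖ * cα (M i)) := by
      rw [obj_eq M hMpovm.2] at hMval
      rw [rhs_eq M hMpovm.2]
      linarith
    have heach := (Finset.sum_eq_sum_iff_of_le
      (fun i _ => term_le i (M i) (hMpovm.1 i))).mp hsum_eq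
    have hwi : ∀ i, cw (M i) = cα (M i) • u i := by
      intro i
      have hterm := heach i (Finset.mem_univ i)
      have hsplit : ⟪s i, cw (M i)⟫ = ⟪s i - c, cw (M i)⟫ + ⟪c, cw (M i)⟫ := by
        rw [inner_sub_left]; ring
      have hei : e i = ‖s i - c‖ - ‖c‖ := by rw [hnormsc i]; ring
      have hinner : ⟪s i - c, cw (M i)⟫ = ‖s i - c‖ * cα (M i) := by
        rw [hsplit, hei] at hterm; linarith
      obtain ⟨hα0, hwα⟩ := psd_comps (hMpovm.1 i)
      have hCS : ⟪s i - c, cw (M i)⟫ ≤ ‖s i - c‖ * ‖cw (M i)‖ := real_inner_le_norm _ _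
      have hnw : ‖cw (M i)‖ = cα (M i) := by
        have h4 : cα (M i) ≤ ‖cw (M i)‖ :=
          le_of_mul_le_mul_left (by linarith [hCS, hinner]) (hnorm_pos i)
        linarith [hwα]
      have hCSeq : ⟪s i - c, cw (M i)⟫ = ‖s i - c‖ * ‖cw (M i)‖ := by
        rw [hnw]; exact hinner
      have hkey := inner_eq_norm_mul_iff_real.mp hCSeq
      have h5 : cw (M i) = ‖s i - c‖⁻¹ • (‖cw (M i)‖ • (s i - c)) := by
        rw [hkey, smul_smul, inv_mul_cancel₀ (hnorm_pos i).ne', one_smul]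
      rw [h5, hnw, hu i, smul_comm]
    -- determine the coefficients via affine independence
    have hβs : ∑ i, (cα (M i) * ‖s i - c‖⁻¹) • s i
        = (∑ i, cα (M i) * ‖s i - c‖⁻¹) • c := by
      have h6 : ∀ i, cw (M i) = (cα (M i) * ‖s i - c‖⁻¹) • s i
          - (cα (M i) * ‖s i - c‖⁻¹) • c := by
        intro i
        rw [hwi i, hu i, smul_smul, ← smul_sub]
      rw [Finset.sum_congr rfl fun i _ => h6 i, Finset.sum_sub_distrib,
        ← Finset.sum_smul] at hWsum
      exact sub_eq_zero.mp hWsum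
    set B : ℝ := ∑ i, cα (M i) * ‖s i - c‖⁻¹ with hBdef
    have hβt : ∀ i, cα (M i) * ‖s i - c‖⁻¹ = B * t i := by
      have hvec : ∑ i, (cα (M i) * ‖s i - c‖⁻¹) • s i = ∑ i, (B * t i) • s i := by
        rw [hβs]
        calc B • c = B • (∑ i, t i • s i) := by rw [hts]
          _ = ∑ i, (B * t i) • s i := by
              rw [Finset.smul_sum]
              exact Finset.sum_congr rfl fun i _ => (smul_smul _ _ _)
      have hsumw : ∑ i, cα (M i) * ‖s i - c‖⁻¹ = ∑ i, B * t i := by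
        rw [← Finset.mul_sum, htsum, mul_one, hBdef]
      exact fun i => haff.eq_of_sum_eq_sum (s := Finset.univ) hsumw hvec i (Finset.mem_univ i)
    have hαi : ∀ i, cα (M i) = (cα (M i) * ‖s i - c‖⁻¹) * ‖s i - c‖ := by
      intro i
      field_simp [(hnorm_pos i).ne']
    have h7 : ∑ i, cα (M i) = B * S := by
      calc ∑ i, cα (M i) = ∑ i, B * (t i * ‖s i - c‖) := by
            refine Finset.sum_congr rfl fun i _ => ?_
            rw [hαi i, hβt i]; ring
        _ = B * ∑ i, t i * ‖s i - c‖ := by rw [← Finset.mul_sum]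
        _ = B * S := by rw [← hSdef]
    have hBS : B * S = 1 := by rw [← h7]; exact hA
    have hB : B = S⁻¹ := by
      field_simp [hSpos.ne']
      linarith [hBS]
    have hpeq : ∀ i, cα (M i) = p i := by
      intro i
      rw [hαi i, hβt i, hB, hp i]
      field_simp [(hnorm_pos i).ne', hSpos.ne']
      try ring
    funext i
    show M i = (p i : ℂ) • (1 + pauliDot (u i))
    rw [herm_decomp (hMpovm.1 i).1, hwi i, hpeq i, hM712 i]

end
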